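/- arXiv:1411.5223 — 4 statements merged into one kernel-verified Lean document; each statement's English description precedes it below -/
import Mathlib

section
/- For all nonnegative integers m ≥ 1, n and complex z₁, z₂ with 0 < q < 1: H_{m,n}(q z₁, z₂ | q) = H_{m,n}(z₁, z₂ | q) - z₁ (1 - q^m) H_{m-1,n}(z₁, z₂ | q). -/
open Finset Filter

noncomputable def qPoch (a q : ℂ) (n : ℕ) : ℂ :=
  ∏ j ∈ Finset.range n, (1 - a * q ^ j)

noncomputable def qbinom (q : ℂ) : ℕ → ℕ → ℂ
  | _, 0 => 1
  | 0, _ + 1 => 0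
  | m + 1, k + 1 => qbinom q m k + q ^ (k + 1) * qbinom q m (k + 1)

/-- The first q-analogue of the 2D Hermite polynomials. -/
noncomputable def H2D (q z1 z2 : ℂ) (m n : ℕ) : ℂ :=
  ∑ k ∈ Finset.range (min m n + 1),
    qbinom q m k * qbinom q n k * (-1) ^ k * q ^ (k.choose 2) * qPoch q q k *
      z1 ^ (m - k) * z2 ^ (n - k)

/-- The second q-analogue of the 2D Hermite polynomials. -/
noncomputable def h2D (q z1 z2 : ℂ) (m n : ℕ) : ℂ :=
  ∑ j ∈ Finset.range (min m n + 1),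
    qbinom q m j * qbinom q n j * q ^ ((m - j) * (n - j)) * (-1) ^ j * qPoch q q j *
      z1 ^ (m - j) * z2 ^ (n - j)

/-- The q-2D ultraspherical (q-disk / q-Zernike) polynomials. -/
noncomputable def p2D (q b z1 z2 : ℂ) (m n : ℕ) : ℂ :=
  ∑ k ∈ Finset.range (min m n + 1),
    qbinom q m k * qbinom q n k * (-1) ^ k * q ^ (k.choose 2) * qPoch q q k *
      qPoch (b * q) q (m + n - k) * z1 ^ (m - k) * z2 ^ (n - k)

/-- The infinite q-Pochhammer product (a;q)_∞. -/
noncomputable def qPochInf (a q : ℂ) : ℂ :=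
  ∏' j : ℕ, (1 - a * q ^ j)

lemma qbinom_eq_zero (q : ℂ) : ∀ m k, m < k → qbinom q m k = 0 := by
  intro m
  induction m with
  | zero =>
    intro k hk
    match k, hk with
    | k + 1, _ => rfl
  | succ m ih =>
    intro k hk
    match k, hk with
    | k + 1, hk =>
      rw [qbinom, ih k (by omega), ih (k+1) (by omega)]
      ring
lemma qbinom_self (q : ℂ) : ∀ m, qbinom q m m = 1 := by
  intro m
  induction m with
  | zero => rfl
  | succ m ih => rw [qbinom, ih, qbinom_eq_zero q m (m+1) (by omega)]; ring
lemma qPoch_succ (a q : ℂ) (n : ℕ) : qPoch a q (n+1) = qPoch a q n * (1 - a * q ^ n) :=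
  Finset.prod_range_succ _ _
lemma prod_formula (q : ℂ) : ∀ m k, k ≤ m →
    qPoch q q k * qPoch q q (m - k) * qbinom q m k = qPoch q q m := by
  intro m
  induction m with
  | zero =>
    intro k hk
    interval_cases k
    simp [qbinom, qPoch]
  | succ m ih =>
    intro k hk
    match k with
    | 0 => simp [qbinom, qPoch]
    | k + 1 =>
      have hk' : k ≤ m := by omega
      rcases eq_or_lt_of_le hk' with h | h
      · subst h
        rw [qbinom, qbinom_self, qbinom_eq_zero q k (k+1) (by omega)]
        simp [qPoch]
      · -- k + 1 ≤ m
        have h1 := ih k hk'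
        have h2 := ih (k+1) (by omega)
        have hmk : m - k = (m - (k+1)) + 1 := by omega
        have hpow : (q:ℂ) ^ (k+1) * q ^ (m - k) = q ^ (m+1) := by
          rw [← pow_add]; congr 1; omega
        rw [qbinom, show m + 1 - (k+1) = m - k from by omega]
        rw [qPoch_succ q q k, qPoch_succ q q m, hmk, qPoch_succ q q (m - (k+1))]
        rw [hmk, qPoch_succ q q (m - (k+1))] at h1
        rw [qPoch_succ q q k] at h2
        have hpow2 : (q:ℂ) ^ 2 * q ^ k * q ^ (m - (k+1)) = q * q ^ m := by
          rw [← pow_add, ← pow_add, show 2 + k + (m - (k+1)) = m + 1 from by omega, pow_succ]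
          ring
        linear_combination (1 - q * q ^ k) * h1 + q ^ (k+1) * (1 - q * q ^ (m - (k+1))) * h2 -
          qPoch q q m * hpow2
lemma qPoch_ne_zero (q : ℝ) (hq0 : 0 < q) (hq1 : q < 1) (n : ℕ) :
    qPoch (q : ℂ) (q : ℂ) n ≠ 0 := by
  rw [qPoch, Finset.prod_ne_zero_iff]
  intro j _
  intro h
  have h1 : ((q * q ^ j : ℝ) : ℂ) = 1 := by
    push_cast
    linear_combination -h
  rw [Complex.ofReal_eq_one] at h1
  have hj : q ^ j ≤ 1 := pow_le_one₀ hq0.le hq1.le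
  nlinarith
lemma key_lemma (q : ℂ) (hne : ∀ nn : ℕ, qPoch q q nn ≠ 0) (m k : ℕ) (hk : k ≤ m) :
    (1 - q ^ (m + 1 - k)) * qbinom q (m+1) k = (1 - q ^ (m+1)) * qbinom q m k := by
  have h1 := prod_formula q m k hk
  have h2 := prod_formula q (m+1) k (by omega)
  rw [show m + 1 - k = m - k + 1 from by omega, qPoch_succ, qPoch_succ] at h2
  apply mul_left_cancel₀ (mul_ne_zero (hne k) (hne (m - k)))
  rw [show m + 1 - k = m - k + 1 from by omega, pow_succ, pow_succ]
  linear_combination h2 - (1 - q ^ m * q) * h1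

theorem stmt1 (m n : ℕ) (hm : 1 ≤ m) (z1 z2 : ℂ) (q : ℝ) (hq0 : 0 < q) (hq1 : q < 1) :
    H2D (q : ℂ) ((q : ℂ) * z1) z2 m n =
      H2D (q : ℂ) z1 z2 m n - z1 * (1 - (q : ℂ) ^ m) * H2D (q : ℂ) z1 z2 (m - 1) n := by
  have hne : ∀ nn : ℕ, qPoch (q:ℂ) (q:ℂ) nn ≠ 0 := qPoch_ne_zero q hq0 hq1
  have key : ∀ k, k ≤ m - 1 →
      (q:ℂ) ^ (m - k) * qbinom (q:ℂ) m k =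
        qbinom (q:ℂ) m k - (1 - (q:ℂ) ^ m) * qbinom (q:ℂ) (m-1) k := by
    intro k hk
    have h := key_lemma (q:ℂ) hne (m-1) k hk
    rw [show m - 1 + 1 = m from by omega] at h
    linear_combination -h
  unfold H2D
  rw [Finset.mul_sum]
  rw [Finset.sum_subset (Finset.range_subset_range.mpr (by omega :
        min (m-1) n + 1 ≤ min m n + 1))
      (by
        intro x hx hx'
        simp only [Finset.mem_range] at hx hx'
        rw [qbinom_eq_zero (q:ℂ) (m-1) x (by omega)]
        ring)]
  rw [← Finset.sum_sub_distrib]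
  apply Finset.sum_congr rfl
  intro k hk
  simp only [Finset.mem_range] at hk
  by_cases hkm : k ≤ m - 1
  · have h1 : ((q:ℂ) * z1) ^ (m-k) = (q:ℂ)^(m-k) * z1^(m-k) := mul_pow _ _ _
    have h2 : z1 ^ (m-k) = z1 * z1 ^ (m-1-k) := by
      rw [← pow_succ']
      congr 1
      omega
    rw [h1, h2]
    linear_combination (qbinom (q:ℂ) n k * (-1)^k * (q:ℂ)^(k.choose 2) * qPoch (q:ℂ) (q:ℂ) k *
      (z1 * z1^(m-1-k)) * z2^(n-k)) * key k hkm
  · rw [qbinom_eq_zero (q:ℂ) (m-1) k (by omega), show m - k = 0 from by omega]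
    ring
end

section
/- For all nonnegative integers m, n ≥ 1 and complex z₁, z₂ with q ≠ 0: q^{-m} H_{m,n}(q z₁, z₂ | q) = H_{m,n}(z₁, z₂ | q) - q^{-1} (1-q^m)(1-q^n) H_{m-1,n-1}(z₁, z₂ | q). -/
open Finset Filter

lemma qbinom_succ (q : ℂ) : ∀ (m k : ℕ),
    (1 - q ^ (m + 1)) * qbinom q m k = (1 - q ^ (k + 1)) * qbinom q (m + 1) (k + 1) := by
  intro m
  induction m with
  | zero =>
    intro k
    cases k with
    | zero => simp [qbinom]
    | succ j => simp [qbinom]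
  | succ m ih =>
    intro k
    cases k with
    | zero =>
      have h := ih 0
      simp only [qbinom] at h ⊢
      ring_nf at h ⊢
      linear_combination q * h
    | succ j =>
      have h1 := ih j
      have h2 := ih (j + 1)
      simp only [qbinom] at h1 h2 ⊢
      linear_combination q * h1 + q ^ (j + 2) * h2

theorem stmt2 (m n : ℕ) (hm : 1 ≤ m) (hn : 1 ≤ n) (z1 z2 q : ℂ) (hq : q ≠ 0) :
    (q ^ m)⁻¹ * H2D q (q * z1) z2 m n =
      H2D q z1 z2 m n - q⁻¹ * (1 - q ^ m) * (1 - q ^ n) * H2D q z1 z2 (m - 1) (n - 1) := by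
  obtain ⟨m, rfl⟩ : ∃ m', m = m' + 1 := ⟨m - 1, by omega⟩
  obtain ⟨n, rfl⟩ : ∃ n', n = n' + 1 := ⟨n - 1, by omega⟩
  simp only [Nat.add_sub_cancel]
  suffices h : (q ^ (m + 1))⁻¹ * H2D q (q * z1) z2 (m + 1) (n + 1) -
      H2D q z1 z2 (m + 1) (n + 1) =
      -(q⁻¹ * (1 - q ^ (m + 1)) * (1 - q ^ (n + 1)) * H2D q z1 z2 m n) by
    linear_combination h
  rw [H2D, H2D, H2D, Nat.succ_min_succ, Finset.mul_sum, ← Finset.sum_sub_distrib,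
    Finset.sum_range_succ', Finset.mul_sum, ← Finset.sum_neg_distrib]
  have h0 : (q ^ (m + 1))⁻¹ *
      (qbinom q (m+1) 0 * qbinom q (n+1) 0 * (-1) ^ 0 * q ^ (Nat.choose 0 2) * qPoch q q 0 *
        (q * z1) ^ (m + 1 - 0) * z2 ^ (n + 1 - 0)) -
      qbinom q (m+1) 0 * qbinom q (n+1) 0 * (-1) ^ 0 * q ^ (Nat.choose 0 2) * qPoch q q 0 *
        z1 ^ (m + 1 - 0) * z2 ^ (n + 1 - 0) = 0 := by
    simp [qbinom, qPoch, mul_pow]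
    field_simp
    ring
  rw [h0, add_zero]
  refine Finset.sum_congr rfl fun j hj => ?_
  rw [Finset.mem_range] at hj
  have hjm : j ≤ m := by omega
  have hjn : j ≤ n := by omega
  have e1 := qbinom_succ q m j
  have e2 := qbinom_succ q n j
  have hp : qPoch q q (j + 1) = qPoch q q j * (1 - q ^ (j + 1)) := by
    rw [qPoch, qPoch, Finset.prod_range_succ, pow_succ']
  have hc : (j + 1).choose 2 = j.choose 2 + j := by
    rw [show (2:ℕ) = 1 + 1 from rfl, Nat.choose_succ_succ, Nat.choose_one_right, Nat.add_comm]
  have hs1 : m + 1 - (j + 1) = m - j := by omega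
  have hs2 : n + 1 - (j + 1) = n - j := by omega
  have hqm : q ^ (m + 1) = q ^ (m - j) * q ^ (j + 1) := by
    rw [← pow_add]; congr 1; omega
  rw [hp, hc, hs1, hs2, pow_add, mul_pow, pow_succ]
  have hne : q ^ (m + 1) ≠ 0 := pow_ne_zero _ hq
  field_simp
  have e12 : (1 - q ^ (m + 1)) * qbinom q m j * ((1 - q ^ (n + 1)) * qbinom q n j) =
      (1 - q ^ (j + 1)) * qbinom q (m + 1) (j + 1) *
        ((1 - q ^ (j + 1)) * qbinom q (n + 1) (j + 1)) := by rw [e1, e2]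
  have hqm' : q ^ m = q ^ (m - j) * q ^ j := by
    rw [← pow_add]; congr 1; omega
  linear_combination (q ^ (j.choose 2) * qPoch q q j * z1 ^ (m - j) * z2 ^ (n - j) * (-1) ^ j) *
    (qbinom q (m + 1) (j + 1) * qbinom q (n + 1) (j + 1) * (1 - q ^ (j + 1)) * hqm' +
      q ^ m * e12)
end

section
/- For all nonnegative integers m, n with m,n ≥ 1 and complex z₁, z₂, q with q ≠ 0: q^{-m} H_{m,n}(q z₁, z₂ | q) = q^{-n} H_{m,n}(z₁, q z₂ | q). -/
open Finset Filter

theorem stmt3 (m n : ℕ) (hm : 1 ≤ m) (hn : 1 ≤ n) (z1 z2 q : ℂ) (hq : q ≠ 0) :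
    (q ^ m)⁻¹ * H2D q (q * z1) z2 m n = (q ^ n)⁻¹ * H2D q z1 (q * z2) m n := by
  unfold H2D
  rw [Finset.mul_sum, Finset.mul_sum]
  refine Finset.sum_congr rfl fun k hk => ?_
  have hk' : k ≤ min m n := Nat.lt_succ_iff.mp (Finset.mem_range.mp hk)
  have hkm : k ≤ m := le_trans hk' (min_le_left _ _)
  have hkn : k ≤ n := le_trans hk' (min_le_right _ _)
  have h1 : q ^ m = q ^ (m - k) * q ^ k := by rw [← pow_add]; congr 1; omega
  have h2 : q ^ n = q ^ (n - k) * q ^ k := by rw [← pow_add]; congr 1; omega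
  rw [mul_pow, mul_pow, h1, h2]
  field_simp
end

section
/- For all m ≥ 1, n ≥ 0 and complex z₁, z₂, q with z₁ ≠ 0, q ≠ 1: the q-difference operator in z₁ acting on H_{m,n} satisfies D_{q,z₁} H_{m,n}(z₁, z₂ | q) = ((1-q^m)/(1-q)) H_{m-1,n}(z₁, z₂ | q), where D_q f(z) = (f(z) - f(qz))/(z - qz). -/
open Finset Filter

lemma qbinom_zero_of_lt (q : ℂ) : ∀ m k : ℕ, m < k → qbinom q m k = 0 := by
  intro m
  induction m with
  | zero =>
    intro k hk
    match k, hk with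
    | k + 1, _ => rfl
  | succ m ih =>
    intro k hk
    match k, hk with
    | k + 1, hk =>
      show qbinom q (m + 1) (k + 1) = 0
      rw [qbinom, ih k (by omega), ih (k + 1) (by omega)]
      ring

lemma qbinom_key' (q : ℂ) : ∀ m k : ℕ, k ≤ m + 1 →
    (1 - q ^ (m + 1 - k)) * qbinom q (m + 1) k = (1 - q ^ (m + 1)) * qbinom q m k := by
  intro m
  induction m with
  | zero =>
    intro k hk
    interval_cases k
    · simp [qbinom]
    · simp [qbinom]
  | succ m ih =>
    intro k hk
    match k with
    | 0 => simp [qbinom]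
    | k + 1 =>
      rcases Nat.lt_or_ge k (m + 1) with h | h
      · obtain ⟨d, rfl⟩ : ∃ d, m = k + d := ⟨m - k, by omega⟩
        have h1 := ih k (by omega)
        have h2 := ih (k + 1) (by omega)
        have hB : qbinom q (k + d + 1 + 1) (k + 1)
            = qbinom q (k + d + 1) k + q ^ (k + 1) * qbinom q (k + d + 1) (k + 1) := by
          rw [qbinom]
        have hB2 : qbinom q (k + d + 1) (k + 1)
            = qbinom q (k + d) k + q ^ (k + 1) * qbinom q (k + d) (k + 1) := by
          rw [qbinom]
        rw [show k + d + 1 + 1 - (k + 1) = d + 1 from by omega]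
        rw [show k + d + 1 - k = d + 1 from by omega] at h1
        rw [show k + d + 1 - (k + 1) = d from by omega] at h2
        rw [hB, hB2]
        rw [hB2] at h2
        linear_combination h1 + q ^ (k + 1) * h2
      · have hk' : k = m + 1 := by omega
        subst hk'
        rw [show m + 1 + 1 - (m + 1 + 1) = 0 from by omega,
          qbinom_zero_of_lt q (m + 1) (m + 1 + 1) (by omega)]
        simp

lemma qbinom_key (q : ℂ) (m k : ℕ) :
    (1 - q ^ (m + 1 - k)) * qbinom q (m + 1) k = (1 - q ^ (m + 1)) * qbinom q m k := by
  rcases le_or_gt k (m + 1) with h | h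
  · exact qbinom_key' q m k h
  · rw [qbinom_zero_of_lt q (m + 1) k h, qbinom_zero_of_lt q m k (by omega)]
    ring

lemma H2D_diff (q z1 z2 : ℂ) (m n : ℕ) :
    H2D q z1 z2 (m + 1) n - H2D q (q * z1) z2 (m + 1) n
      = (1 - q ^ (m + 1)) * z1 * H2D q z1 z2 m n := by
  have hsub : Finset.range (min m n + 1) ⊆ Finset.range (min (m + 1) n + 1) :=
    Finset.range_subset_range.2 (by omega)
  have hext : H2D q z1 z2 m n = ∑ k ∈ Finset.range (min (m + 1) n + 1),
      qbinom q m k * qbinom q n k * (-1) ^ k * q ^ (k.choose 2) * qPoch q q k *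
        z1 ^ (m - k) * z2 ^ (n - k) := by
    rw [H2D]
    refine Finset.sum_subset hsub ?_
    intro x hx hx'
    simp only [Finset.mem_range] at hx hx'
    have hxm : m < x := by omega
    rw [qbinom_zero_of_lt q m x hxm]
    ring
  rw [H2D, H2D, hext, ← Finset.sum_sub_distrib, Finset.mul_sum]
  refine Finset.sum_congr rfl ?_
  intro k hk
  simp only [Finset.mem_range] at hk
  have hkm : k ≤ m + 1 := by omega
  have hK := qbinom_key q m k
  rw [mul_pow]
  rcases Nat.lt_or_ge k (m + 1) with h | h
  · rw [show m + 1 - k = m - k + 1 from by omega] at hK ⊢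
    linear_combination (qbinom q n k * (-1) ^ k * q ^ (k.choose 2) * qPoch q q k *
      z1 ^ (m - k) * z1 * z2 ^ (n - k)) * hK
  · have hk' : k = m + 1 := by omega
    subst hk'
    rw [show m + 1 - (m + 1) = 0 from by omega,
      qbinom_zero_of_lt q m (m + 1) (by omega)]
    simp

theorem stmt5 (m n : ℕ) (hm : 1 ≤ m) (z1 z2 q : ℂ) (hz1 : z1 ≠ 0) (hq : q ≠ 1) :
    (H2D q z1 z2 m n - H2D q (q * z1) z2 m n) / (z1 - q * z1) =
      ((1 - q ^ m) / (1 - q)) * H2D q z1 z2 (m - 1) n := by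
  obtain ⟨m', rfl⟩ : ∃ m', m = m' + 1 := ⟨m - 1, by omega⟩
  simp only [Nat.add_sub_cancel]
  have h1q : (1 : ℂ) - q ≠ 0 := sub_ne_zero_of_ne (Ne.symm hq)
  have hz : z1 - q * z1 ≠ 0 := by
    rw [show z1 - q * z1 = z1 * (1 - q) from by ring]
    exact mul_ne_zero hz1 h1q
  rw [H2D_diff, div_eq_iff hz]
  field_simp
end
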